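/- Let g ≥ 1 and Ω ∈ ℋ_g. Then the Riemann theta function z ↦ θ(Ω;z) = ∑_{n∈ℤ^g} exp(πi nᵀΩn + 2πi nᵀz) is complex-differentiable (holomorphic) as a function ℂ^g → ℂ, i.e., it is Differentiable over ℂ on all of ℂ^g. -/

import Mathlib

open scoped Real
open Matrix MeasureTheory

noncomputable section

/-- An integer vector viewed as a vector in `ℂ^g`. -/
def zc {g : ℕ} (n : Fin g → ℤ) : Fin g → ℂ := fun i => (n i : ℂ)

/-- A real vector viewed as a vector in `ℂ^g`. -/
def rc {g : ℕ} (x : Fin g → ℝ) : Fin g → ℂ := fun i => (x i : ℂ)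

/-- An integer vector viewed as a vector in `ℝ^g`. -/
def zr {g : ℕ} (n : Fin g → ℤ) : Fin g → ℝ := fun i => (n i : ℝ)

/-- The entrywise imaginary part of a complex vector. -/
def imVec {g : ℕ} (z : Fin g → ℂ) : Fin g → ℝ := fun i => (z i).im

/-- A single term of the Riemann theta series:
`exp(πi nᵀΩn + 2πi nᵀz)`. -/
def thetaTerm {g : ℕ} (Ω : Matrix (Fin g) (Fin g) ℂ) (z : Fin g → ℂ) (n : Fin g → ℤ) : ℂ :=
  Complex.exp ((Real.pi : ℂ) * Complex.I * (zc n ⬝ᵥ Ω.mulVec (zc n)) +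
    2 * (Real.pi : ℂ) * Complex.I * (zc n ⬝ᵥ z))

/-- The Riemann theta function `θ(Ω;z) = ∑_{n ∈ ℤ^g} exp(πi nᵀΩn + 2πi nᵀz)`. -/
def theta {g : ℕ} (Ω : Matrix (Fin g) (Fin g) ℂ) (z : Fin g → ℂ) : ℂ :=
  ∑' n : Fin g → ℤ, thetaTerm Ω z n

/-! ### Auxiliary lemmas -/

/-- One-dimensional summability of `exp(-a m² + b|m|)` over `ℤ`. -/
lemma aux_lemA (a b : ℝ) (ha : 0 < a) :
    Summable (fun m : ℤ => Real.exp (-a * (m : ℝ) ^ 2 + b * |(m : ℝ)|)) := by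
  have key : Summable (fun k : ℕ => Real.exp (-a * (k : ℝ) ^ 2 + b * (k : ℝ))) := by
    apply summable_of_ratio_norm_eventually_le (r := 1/2) (by norm_num)
    have hK : ∀ᶠ k : ℕ in Filter.atTop, (b + 1) / (2 * a) ≤ (k : ℝ) := by
      exact_mod_cast Filter.Tendsto.eventually_ge_atTop tendsto_natCast_atTop_atTop _
    filter_upwards [hK] with k hk
    have h1 : b + 1 ≤ 2 * a * k := by
      rw [div_le_iff₀ (by positivity)] at hk; linarith [hk]
    have h2 : -a * ((k : ℝ) + 1) ^ 2 + b * ((k : ℝ) + 1)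
        ≤ (-a * (k : ℝ) ^ 2 + b * (k : ℝ)) + (-1) := by nlinarith [ha.le]
    have h3 : Real.exp (-a * ((k : ℝ) + 1) ^ 2 + b * ((k : ℝ) + 1))
        ≤ Real.exp (-a * (k : ℝ) ^ 2 + b * (k : ℝ)) * Real.exp (-1) := by
      rw [← Real.exp_add]; exact Real.exp_le_exp.2 h2
    have h4 : Real.exp (-1 : ℝ) ≤ 1 / 2 := by
      rw [Real.exp_neg]
      rw [inv_le_comm₀ (Real.exp_pos 1) (by norm_num)]
      calc (1/2 : ℝ)⁻¹ = 2 := by norm_num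
        _ ≤ Real.exp 1 := by linarith [Real.add_one_le_exp (1 : ℝ)]
    simp only [Real.norm_eq_abs, abs_of_pos (Real.exp_pos _)]
    push_cast
    calc Real.exp (-a * ((k : ℝ) + 1) ^ 2 + b * ((k : ℝ) + 1))
        ≤ Real.exp (-a * (k : ℝ) ^ 2 + b * (k : ℝ)) * (1/2) := by
          refine h3.trans ?_
          exact mul_le_mul_of_nonneg_left h4 (Real.exp_pos _).le
      _ = 1 / 2 * Real.exp (-a * (k : ℝ) ^ 2 + b * (k : ℝ)) := by ring
  apply Summable.of_nat_of_neg
  · simpa [abs_of_nonneg (Nat.cast_nonneg _ : (0:ℝ) ≤ _)] using key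
  · simpa [abs_of_nonneg (Nat.cast_nonneg _ : (0:ℝ) ≤ _)] using key

/-- Summability of products over `ℤ^k` of a nonnegative summable function. -/
lemma aux_lemB (h : ℤ → ℝ) (h0 : ∀ m, 0 ≤ h m) (hs : Summable h) :
    ∀ k : ℕ, Summable (fun n : Fin k → ℤ => ∏ i, h (n i)) := by
  intro k
  induction k with
  | zero =>
    haveI : Subsingleton (Fin 0 → ℤ) := ⟨fun a b => funext fun i => Fin.elim0 i⟩
    exact .of_finite
  | succ k ih =>
    have step : Summable (fun p : ℤ × (Fin k → ℤ) => h p.1 * ∏ i, h (p.2 i)) :=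
      Summable.mul_of_nonneg (f := h) (g := fun n : Fin k → ℤ => ∏ i, h (n i))
        hs ih h0 (fun n => Finset.prod_nonneg fun i _ => h0 _)
    have heq : ((fun n : Fin (k+1) → ℤ => ∏ i, h (n i)) ∘ (Fin.consEquiv fun _ => ℤ))
        = fun p : ℤ × (Fin k → ℤ) => h p.1 * ∏ i, h (p.2 i) := by
      funext p
      simp only [Function.comp_apply, Fin.consEquiv_apply]
      rw [Fin.prod_univ_succ]
      simp
    rw [← (Fin.consEquiv fun _ => ℤ).summable_iff, heq]
    exact step

/-- Lower bound for a positive definite quadratic form. -/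
lemma aux_lemC (g : ℕ) (hg : 1 ≤ g) (Y : Matrix (Fin g) (Fin g) ℝ) (hY : Y.PosDef) :
    ∃ c : ℝ, 0 < c ∧ ∀ x : Fin g → ℝ, c * ∑ i, x i ^ 2 ≤ x ⬝ᵥ Y.mulVec x := by
  haveI : Nonempty (Fin g) := ⟨⟨0, hg⟩⟩
  set f : (Fin g → ℝ) → ℝ := fun x => x ⬝ᵥ Y.mulVec x with hf
  have hcont : Continuous f := by
    rw [hf]
    simp only [dotProduct, Matrix.mulVec]
    apply continuous_finset_sum
    intro i _
    exact (continuous_apply i).mul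
      (continuous_finset_sum _ fun j _ => continuous_const.mul (continuous_apply j))
  have hsph : (Metric.sphere (0 : Fin g → ℝ) 1).Nonempty :=
    NormedSpace.sphere_nonempty.mpr zero_le_one
  obtain ⟨u, hu, hmin⟩ := (isCompact_sphere (0 : Fin g → ℝ) 1).exists_isMinOn hsph
    hcont.continuousOn
  rw [mem_sphere_zero_iff_norm] at hu
  have hune : u ≠ 0 := fun h => by simp [h] at hu
  have hcpos : 0 < f u := by
    have := hY.dotProduct_mulVec_pos hune
    simpa [f, dotProduct] using this
  set c := f u
  refine ⟨c / g, by positivity, fun x => ?_⟩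
  rcases eq_or_ne x 0 with rfl | hx
  · simp
  · have hxn : 0 < ‖x‖ := norm_pos_iff.2 hx
    set v : Fin g → ℝ := ‖x‖⁻¹ • x with hv
    have hvs : v ∈ Metric.sphere (0 : Fin g → ℝ) 1 := by
      rw [mem_sphere_zero_iff_norm, hv, norm_smul]
      simp [abs_of_pos (inv_pos.2 hxn), inv_mul_cancel₀ hxn.ne']
    have hfv : c ≤ f v := hmin hvs
    have hscale : f x = ‖x‖ ^ 2 * f v := by
      show x ⬝ᵥ Y *ᵥ x = ‖x‖ ^ 2 * ((‖x‖⁻¹ • x) ⬝ᵥ Y *ᵥ (‖x‖⁻¹ • x))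
      rw [Matrix.mulVec_smul, smul_dotProduct, dotProduct_smul]
      simp [smul_eq_mul]
      field_simp
    have hsum : ∑ i, x i ^ 2 ≤ g * ‖x‖ ^ 2 := by
      calc ∑ i, x i ^ 2 ≤ ∑ _i : Fin g, ‖x‖ ^ 2 := by
            apply Finset.sum_le_sum
            intro i _
            have := norm_le_pi_norm x i
            calc x i ^ 2 = |x i| ^ 2 := (sq_abs _).symm
              _ ≤ ‖x‖ ^ 2 := by
                  apply pow_le_pow_left₀ (abs_nonneg _)
                  simpa using this
        _ = g * ‖x‖ ^ 2 := by simp [Finset.sum_const, nsmul_eq_mul]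
    calc c / g * ∑ i, x i ^ 2 ≤ c / g * (g * ‖x‖ ^ 2) := by
          apply mul_le_mul_of_nonneg_left hsum (by positivity)
      _ = c * ‖x‖ ^ 2 := by field_simp
      _ ≤ f v * ‖x‖ ^ 2 := by nlinarith
      _ = f x := by rw [hscale]; ring

lemma aux_Qim {g : ℕ} (Ω : Matrix (Fin g) (Fin g) ℂ) (n : Fin g → ℤ) :
    (zc n ⬝ᵥ Ω.mulVec (zc n)).im = zr n ⬝ᵥ (Ω.map Complex.im).mulVec (zr n) := by
  simp [dotProduct, Matrix.mulVec, zc, zr, Complex.im_sum, Complex.mul_im,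
    Matrix.map_apply, Finset.mul_sum]

lemma aux_Sim {g : ℕ} (z : Fin g → ℂ) (n : Fin g → ℤ) :
    (zc n ⬝ᵥ z).im = ∑ i, (n i : ℝ) * (z i).im := by
  simp [dotProduct, zc, Complex.im_sum, Complex.mul_im]

/-- The norm of a theta series term. -/
lemma aux_norm {g : ℕ} (Ω : Matrix (Fin g) (Fin g) ℂ) (z : Fin g → ℂ) (n : Fin g → ℤ) :
    ‖thetaTerm Ω z n‖ = Real.exp (-π * (zr n ⬝ᵥ (Ω.map Complex.im).mulVec (zr n))
      - 2 * π * ∑ i, (n i : ℝ) * (z i).im) := by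
  rw [thetaTerm, Complex.norm_exp]
  congr 1
  rw [Complex.add_re]
  have h1 : ((Real.pi : ℂ) * Complex.I * (zc n ⬝ᵥ Ω.mulVec (zc n))).re
      = -π * (zc n ⬝ᵥ Ω.mulVec (zc n)).im := by
    simp [Complex.mul_re, Complex.mul_im]
  have h2 : (2 * (Real.pi : ℂ) * Complex.I * (zc n ⬝ᵥ z)).re
      = -(2 * π) * (zc n ⬝ᵥ z).im := by
    simp [Complex.mul_re, Complex.mul_im]
  rw [h1, h2, aux_Qim, aux_Sim]
  ring

/-- The differential of a theta series term. -/
def Lmap {g : ℕ} (n : Fin g → ℤ) : (Fin g → ℂ) →L[ℂ] ℂ :=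
  (2 * (Real.pi : ℂ) * Complex.I) • ∑ i, (n i : ℂ) • (ContinuousLinearMap.proj i)

lemma Lmap_apply {g : ℕ} (n : Fin g → ℤ) (z : Fin g → ℂ) :
    Lmap n z = 2 * (Real.pi : ℂ) * Complex.I * (zc n ⬝ᵥ z) := by
  simp [Lmap, dotProduct, zc, Finset.mul_sum, smul_eq_mul]

lemma Lmap_norm {g : ℕ} (n : Fin g → ℤ) :
    ‖Lmap n‖ ≤ 2 * π * ∑ i, |(n i : ℝ)| := by
  apply ContinuousLinearMap.opNorm_le_bound _ (by positivity)
  intro z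
  rw [Lmap_apply]
  rw [norm_mul]
  have h1 : ‖2 * (Real.pi : ℂ) * Complex.I‖ = 2 * π := by
    simp [norm_mul, Real.pi_nonneg, abs_of_nonneg]
  rw [h1]
  have h2 : ‖zc n ⬝ᵥ z‖ ≤ (∑ i, |(n i : ℝ)|) * ‖z‖ := by
    rw [dotProduct, Finset.sum_mul]
    refine (norm_sum_le _ _).trans (Finset.sum_le_sum fun i _ => ?_)
    rw [norm_mul]
    have hni : ‖zc n i‖ = |(n i : ℝ)| := by
      rw [show (zc n i) = ((n i : ℝ) : ℂ) by simp [zc]]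
      exact Complex.norm_real _
    rw [hni]
    exact mul_le_mul_of_nonneg_left (norm_le_pi_norm z i) (abs_nonneg _)
  calc (2 * π) * ‖zc n ⬝ᵥ z‖ ≤ (2 * π) * ((∑ i, |(n i : ℝ)|) * ‖z‖) :=
        mul_le_mul_of_nonneg_left h2 (by positivity)
    _ = 2 * π * (∑ i, |(n i : ℝ)|) * ‖z‖ := by ring

lemma thetaTerm_hasFDerivAt {g : ℕ} (Ω : Matrix (Fin g) (Fin g) ℂ) (n : Fin g → ℤ)
    (z : Fin g → ℂ) :
    HasFDerivAt (fun w => thetaTerm Ω w n) (thetaTerm Ω z n • Lmap n) z := by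
  have h0 : (fun w : Fin g → ℂ => thetaTerm Ω w n)
      = fun w => Complex.exp ((Real.pi : ℂ) * Complex.I * (zc n ⬝ᵥ Ω.mulVec (zc n)) + Lmap n w) := by
    funext w
    rw [thetaTerm, Lmap_apply]
  rw [h0, thetaTerm, ← Lmap_apply]
  exact (((Lmap n).hasFDerivAt (x := z)).const_add _).cexp

set_option maxHeartbeats 1000000 in
/-- the Riemann theta function `z ↦ θ(Ω;z)` is holomorphic on `ℂ^g`. -/
theorem statement12 (g : ℕ) (hg : 1 ≤ g) (Ω : Matrix (Fin g) (Fin g) ℂ)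
    (hsym : Ω.IsSymm) (hpos : (Ω.map Complex.im).PosDef) :
    Differentiable ℂ (fun z : Fin g → ℂ => theta Ω z) := by
  obtain ⟨c, hc, hq⟩ := aux_lemC g hg _ hpos
  intro z₀
  set M : ℝ := ‖z₀‖ + 1 with hM
  have hM0 : 0 < M := by positivity
  set b : ℝ := 2 * π * M + 1 with hb
  set h : ℤ → ℝ := fun m => Real.exp (-(π * c) * (m : ℝ) ^ 2 + b * |(m : ℝ)|) with hh
  have hhs : Summable h := aux_lemA (π * c) b (by positivity)
  have hh0 : ∀ m, 0 ≤ h m := fun m => (Real.exp_pos _).le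
  -- quantities
  set A : (Fin g → ℤ) → ℝ :=
    fun n => -(π * c) * (∑ i, (n i : ℝ) ^ 2) + 2 * π * M * ∑ i, |(n i : ℝ)| with hA
  set B : (Fin g → ℤ) → ℝ := fun n => ∑ i, |(n i : ℝ)| with hB
  have hB0 : ∀ n, 0 ≤ B n := fun n => Finset.sum_nonneg fun i _ => abs_nonneg _
  have hAB : ∀ n, Real.exp (A n + B n) = ∏ i, h (n i) := by
    intro n
    have hsum : A n + B n = ∑ i, (-(π * c) * (n i : ℝ) ^ 2 + b * |(n i : ℝ)|) := by
      have e1 : ∑ i, (-(π * c) * (n i : ℝ) ^ 2 + b * |(n i : ℝ)|)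
          = -(π * c) * (∑ i, (n i : ℝ) ^ 2) + b * (∑ i, |(n i : ℝ)|) := by
        rw [Finset.sum_add_distrib, ← Finset.mul_sum, ← Finset.mul_sum]
      rw [e1]
      simp only [hA, hB, hb]
      ring
    rw [hsum, Real.exp_sum]
  -- the key pointwise bound on the ball
  have hball : ∀ n : Fin g → ℤ, ∀ z ∈ Metric.ball z₀ 1,
      ‖thetaTerm Ω z n‖ ≤ Real.exp (A n) := by
    intro n z hz
    rw [aux_norm]
    apply Real.exp_le_exp.2
    have hq' : c * ∑ i, (n i : ℝ) ^ 2 ≤ zr n ⬝ᵥ (Ω.map Complex.im).mulVec (zr n) := hq (zr n)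
    have him : ∀ i, |(z i).im| ≤ M := by
      intro i
      have h1 : |(z i).im| ≤ ‖z i‖ := Complex.abs_im_le_norm (z i)
      have h2 : ‖z i‖ ≤ ‖z‖ := norm_le_pi_norm z i
      have h3 : ‖z‖ ≤ ‖z₀‖ + ‖z - z₀‖ := norm_le_norm_add_norm_sub' z z₀
      have h4 : ‖z - z₀‖ < 1 := by
        rw [← dist_eq_norm]; exact Metric.mem_ball.1 hz
      rw [hM]; linarith
    have hT : -(M * B n) ≤ ∑ i, (n i : ℝ) * (z i).im := by
      have step : ∀ i ∈ Finset.univ, -(M * |(n i : ℝ)|) ≤ (n i : ℝ) * (z i).im := by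
        intro i _
        have h1 : |(n i : ℝ) * (z i).im| ≤ |(n i : ℝ)| * M := by
          rw [abs_mul]
          exact mul_le_mul_of_nonneg_left (him i) (abs_nonneg _)
        have h2 := neg_abs_le ((n i : ℝ) * (z i).im)
        linarith
      calc -(M * B n) = ∑ i, -(M * |(n i : ℝ)|) := by
            rw [hB, Finset.mul_sum, ← Finset.sum_neg_distrib]
        _ ≤ ∑ i, (n i : ℝ) * (z i).im := Finset.sum_le_sum step
    have hBn : B n = ∑ i, |(n i : ℝ)| := rfl
    show _ ≤ -(π * c) * (∑ i, (n i : ℝ) ^ 2) + 2 * π * M * ∑ i, |(n i : ℝ)|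
    rw [← hBn]
    have hp := Real.pi_pos
    nlinarith [mul_le_mul_of_nonneg_left hq' hp.le,
      mul_le_mul_of_nonneg_left hT (by positivity : (0:ℝ) ≤ 2 * π)]
  -- the summable majorant for the derivatives
  set u : (Fin g → ℤ) → ℝ := fun n => 2 * π * ∏ i, h (n i) with hu
  have hus : Summable u := (aux_lemB h hh0 hhs g).mul_left _
  -- derivative bound on the ball
  have hder : ∀ n : Fin g → ℤ, ∀ z ∈ Metric.ball z₀ 1,
      ‖thetaTerm Ω z n • Lmap n‖ ≤ u n := by
    intro n z hz
    refine (ContinuousLinearMap.opNorm_smul_le (thetaTerm Ω z n) (Lmap n)).trans ?_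
    have h1 := hball n z hz
    have h2 := Lmap_norm n
    have h3 : B n ≤ Real.exp (B n) := by
      have := Real.add_one_le_exp (B n); linarith
    have h4 : ‖Lmap n‖ ≤ 2 * π * Real.exp (B n) := by
      refine h2.trans ?_
      have : (∑ i, |(n i : ℝ)|) = B n := rfl
      rw [this]
      exact mul_le_mul_of_nonneg_left h3 (by positivity)
    calc ‖thetaTerm Ω z n‖ * ‖Lmap n‖
        ≤ Real.exp (A n) * (2 * π * Real.exp (B n)) := by
          apply mul_le_mul h1 h4 (norm_nonneg _) (Real.exp_pos _).le
      _ = 2 * π * (Real.exp (A n) * Real.exp (B n)) := mul_left_comm _ _ _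
      _ = 2 * π * Real.exp (A n + B n) := by rw [← Real.exp_add]
      _ = u n := by rw [hu, hAB]
  -- summability of the series at the center
  have hsum0 : Summable (fun n : Fin g → ℤ => thetaTerm Ω z₀ n) := by
    have hsB : Summable (fun n : Fin g → ℤ => ∏ i, h (n i)) := aux_lemB h hh0 hhs g
    apply Summable.of_norm_bounded (g := fun n : Fin g → ℤ => ∏ i, h (n i)) hsB
    intro n
    refine (hball n z₀ (Metric.mem_ball_self one_pos)).trans ?_
    rw [← hAB]
    exact Real.exp_le_exp.2 (by linarith [hB0 n])
  -- apply the differentiability-of-series theorem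
  have key := hasFDerivAt_tsum_of_isPreconnected hus Metric.isOpen_ball
    (convex_ball z₀ 1).isPreconnected
    (fun n z _ => thetaTerm_hasFDerivAt Ω n z)
    hder (Metric.mem_ball_self one_pos) hsum0 (Metric.mem_ball_self one_pos)
  exact key.differentiableAt
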